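/- Discrete-time first-order optimality conditions (Pontryagin/KKT). Suppose the maps f, ℓ, φ are continuously differentiable and fix θ ∈ ℝ^{n_θ}. Let (x*_0,…,x*_N, u*_0,…,u*_{N−1}) be a trajectory that is feasible (x*_0 = ξ(θ) and x*_{k+1} = f(x*_k,u*_k,θ) for all k) and is a local minimizer of the total cost J(x,u) = Σ_{k=0}^{N−1} ℓ(x_k,u_k,θ) + φ(x_N,θ) among all feasible trajectories (equivalently, the control sequence u* is a local minimizer of the induced cost as a function of the control sequence alone). Then the multipliers defined backward by λ_N = ∇_x φ(x*_N,θ) and λ_k = ∇_x ℓ(x*_k,u*_k,θ) + (D_x f(x*_k,u*_k,θ))ᵀ λ_{k+1} satisfy the stationarity conditions 0 = ∇_u ℓ(x*_k,u*_k,θ) + (D_u f(x*_k,u*_k,θ))ᵀ λ_{k+1} for every k = 0,…,N−1; in particular, together with x*, these λ's make every partial gradient of the Lagrangian 𝓛 vanish. -/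

import Mathlib

open scoped InnerProductSpace

noncomputable section

/-- Euclidean space `ℝ^n`. -/
abbrev E (n : ℕ) : Type := EuclideanSpace ℝ (Fin n)

lemma grad_inner_eq {n : ℕ} (g : E n → ℝ) (a h : E n) :
    ⟪gradient g a, h⟫_ℝ = fderiv ℝ g a h :=
  InnerProductSpace.toDual_symm_apply

/-- **Discrete-time first-order optimality conditions (Pontryagin/KKT).**
If the feasible trajectory `(x, u)` is a local minimizer of the induced cost (as a function of
the control sequence alone, via the rollout map `traj`), then the multipliers `lam` defined
backward by `lam N = ∇ₓ φ(x_N, θ)` and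
`lam k = ∇ₓ ℓ(x_k, u_k, θ) + (Dₓ f(x_k, u_k, θ))ᵀ lam (k+1)` satisfy the stationarity conditions
`0 = ∇ᵤ ℓ(x_k, u_k, θ) + (Dᵤ f(x_k, u_k, θ))ᵀ lam (k+1)` for every `k < N`. -/
theorem stmt0 (nx nu nθ N : ℕ)
    (f : E nx → E nu → E nθ → E nx)
    (ℓ : E nx → E nu → E nθ → ℝ)
    (φ : E nx → E nθ → ℝ)
    (ξ : E nθ → E nx)
    (hf : ContDiff ℝ 1 fun p : E nx × E nu × E nθ => f p.1 p.2.1 p.2.2)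
    (hℓ : ContDiff ℝ 1 fun p : E nx × E nu × E nθ => ℓ p.1 p.2.1 p.2.2)
    (hφ : ContDiff ℝ 1 fun p : E nx × E nθ => φ p.1 p.2)
    (hξ : ContDiff ℝ 1 ξ)
    (θ : E nθ)
    (x : ℕ → E nx) (u : ℕ → E nu)
    -- feasibility of the trajectory
    (hx0 : x 0 = ξ θ)
    (hdyn : ∀ k < N, x (k + 1) = f (x k) (u k) θ)
    -- the rollout map: states induced by an arbitrary control sequence
    (traj : (ℕ → E nu) → ℕ → E nx)
    (htraj0 : ∀ v, traj v 0 = ξ θ)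
    (htraj : ∀ v k, traj v (k + 1) = f (traj v k) (v k) θ)
    -- `u` is a local minimizer of the induced cost over control sequences
    (hmin : IsLocalMin
      (fun v : ℕ → E nu =>
        (∑ k ∈ Finset.range N, ℓ (traj v k) (v k) θ) + φ (traj v N) θ) u)
    -- the multipliers, defined backward
    (lam : ℕ → E nx)
    (hlamN : lam N = gradient (fun x' => φ x' θ) (x N))
    (hlam : ∀ k < N, lam k =
      gradient (fun x' => ℓ x' (u k) θ) (x k)
        + ContinuousLinearMap.adjoint (fderiv ℝ (fun x' => f x' (u k) θ) (x k)) (lam (k + 1))) :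
    ∀ k < N, (0 : E nu) =
      gradient (fun u' => ℓ (x k) u' θ) (u k)
        + ContinuousLinearMap.adjoint (fderiv ℝ (fun u' => f (x k) u' θ) (u k)) (lam (k + 1)) := by
  have hF := hf.differentiable one_ne_zero
  have hLd := hℓ.differentiable one_ne_zero
  have hΦd := hφ.differentiable one_ne_zero
  have hfx : ∀ (a : E nx) (b : E nu), DifferentiableAt ℝ (fun x' : E nx => f x' b θ) a := by
    intro a b
    exact (hF (a, b, θ)).comp (f := fun x' : E nx => (x', b, θ)) a
      (differentiableAt_id.prodMk ((differentiableAt_const b).prodMk (differentiableAt_const θ)))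
  have hfu : ∀ (a : E nx) (b : E nu), DifferentiableAt ℝ (fun u' : E nu => f a u' θ) b := by
    intro a b
    exact (hF (a, b, θ)).comp (f := fun u' : E nu => (a, u', θ)) b
      ((differentiableAt_const a).prodMk (differentiableAt_id.prodMk (differentiableAt_const θ)))
  have hℓx : ∀ (a : E nx) (b : E nu), DifferentiableAt ℝ (fun x' : E nx => ℓ x' b θ) a := by
    intro a b
    exact (hLd (a, b, θ)).comp (f := fun x' : E nx => (x', b, θ)) a
      (differentiableAt_id.prodMk ((differentiableAt_const b).prodMk (differentiableAt_const θ)))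
  have hℓu : ∀ (a : E nx) (b : E nu), DifferentiableAt ℝ (fun u' : E nu => ℓ a u' θ) b := by
    intro a b
    exact (hLd (a, b, θ)).comp (f := fun u' : E nu => (a, u', θ)) b
      ((differentiableAt_const a).prodMk (differentiableAt_id.prodMk (differentiableAt_const θ)))
  have hφx : ∀ (a : E nx), DifferentiableAt ℝ (fun x' : E nx => φ x' θ) a := by
    intro a
    exact (hΦd (a, θ)).comp (f := fun x' : E nx => (x', θ)) a ((differentiableAt_id (x := a)).prodMk (differentiableAt_const θ))
  intro k hk
  -- traj u = x on [0, N]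
  have htrx : ∀ j, j ≤ N → traj u j = x j := by
    intro j
    induction j with
    | zero => intro _; rw [htraj0, hx0]
    | succ j ih =>
      intro hj
      have hjN : j < N := hj
      rw [htraj, ih hjN.le, ← hdyn j hjN]
  -- perturbed trajectories agree with x up to stage k
  have hylow : ∀ (w : E nu) (j : ℕ), j ≤ k → traj (Function.update u k w) j = x j := by
    intro w j
    induction j with
    | zero => intro _; rw [htraj0, hx0]
    | succ j ih =>
      intro hj
      have hjk : j < k := hj
      rw [htraj, ih hjk.le, Function.update_of_ne (Nat.ne_of_lt hjk), ← hdyn j (hjk.trans hk)]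
  have hgb : Function.update u k (u k) = u := Function.update_eq_self k u
  have hyuk : ∀ j, j ≤ N → traj (Function.update u k (u k)) j = x j := by
    intro j hj; rw [hgb]; exact htrx j hj
  -- the derivative of the rollout w.r.t. the k-th control
  let B : ℕ → (E nu →L[ℝ] E nx) := fun j =>
    Nat.rec 0 (fun j Bj => if j = k then fderiv ℝ (fun u' => f (x k) u' θ) (u k)
      else (fderiv ℝ (fun x' => f x' (u j) θ) (x j)).comp Bj) j
  have hB0 : B 0 = 0 := rfl
  have hBs : ∀ j, B (j + 1) = if j = k then fderiv ℝ (fun u' => f (x k) u' θ) (u k)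
      else (fderiv ℝ (fun x' => f x' (u j) θ) (x j)).comp (B j) := fun _ => rfl
  have hyder : ∀ j, j ≤ N →
      HasFDerivAt (fun w : E nu => traj (Function.update u k w) j) (B j) (u k) := by
    intro j
    induction j with
    | zero =>
      intro _
      have heq : (fun w : E nu => traj (Function.update u k w) 0) = fun _ => ξ θ := by
        funext w; exact htraj0 _
      rw [heq, hB0]
      exact hasFDerivAt_const _ _
    | succ j ih =>
      intro hj
      have hjN : j < N := hj
      by_cases hjk : j = k
      · subst hjk
        have heq : (fun w : E nu => traj (Function.update u j w) (j + 1))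
            = fun w => f (x j) w θ := by
          funext w
          rw [htraj, hylow w j le_rfl, Function.update_self]
        rw [heq, hBs, if_pos rfl]
        exact (hfu (x j) (u j)).hasFDerivAt
      · have heq : (fun w : E nu => traj (Function.update u k w) (j + 1))
            = (fun x' => f x' (u j) θ) ∘ (fun w => traj (Function.update u k w) j) := by
          funext w
          simp only [Function.comp]
          rw [htraj, Function.update_of_ne hjk]
        rw [heq, hBs, if_neg hjk]
        have houter : HasFDerivAt (fun x' => f x' (u j) θ)
            (fderiv ℝ (fun x' => f x' (u j) θ) (x j)) (traj (Function.update u k (u k)) j) := by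
          rw [hyuk j hjN.le]
          exact (hfx (x j) (u j)).hasFDerivAt
        exact houter.comp (u k) (ih hjN.le)
  -- the cost-to-go derivative
  have hG : ∀ m j, j + m = N → k < j →
      HasFDerivAt (fun w : E nu =>
          (∑ i ∈ Finset.Ico j N, ℓ (traj (Function.update u k w) i) (u i) θ)
            + φ (traj (Function.update u k w) N) θ)
        ((innerSL ℝ (lam j)).comp (B j)) (u k) := by
    intro m
    induction m with
    | zero =>
      intro j hj hkj
      have hjN : j = N := by omega
      subst hjN
      have heq : (fun w : E nu =>
          (∑ i ∈ Finset.Ico j j, ℓ (traj (Function.update u k w) i) (u i) θ)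
            + φ (traj (Function.update u k w) j) θ)
          = (fun x' => φ x' θ) ∘ (fun w => traj (Function.update u k w) j) := by
        funext w
        simp [Function.comp]
      rw [heq]
      have houter : HasFDerivAt (fun x' => φ x' θ)
          (fderiv ℝ (fun x' => φ x' θ) (x j)) (traj (Function.update u k (u k)) j) := by
        rw [hyuk j le_rfl]
        exact (hφx (x j)).hasFDerivAt
      have hcomp := houter.comp (u k) (hyder j le_rfl)
      have hder : innerSL ℝ (lam j) = fderiv ℝ (fun x' => φ x' θ) (x j) := by
        apply ContinuousLinearMap.ext
        intro h
        rw [innerSL_apply_apply, hlamN, grad_inner_eq]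
      rw [hder]
      exact hcomp
    | succ m ih =>
      intro j hj hkj
      have hjN : j < N := by omega
      have heq : (fun w : E nu =>
          (∑ i ∈ Finset.Ico j N, ℓ (traj (Function.update u k w) i) (u i) θ)
            + φ (traj (Function.update u k w) N) θ)
          = fun w : E nu => ℓ (traj (Function.update u k w) j) (u j) θ
            + ((∑ i ∈ Finset.Ico (j + 1) N, ℓ (traj (Function.update u k w) i) (u i) θ)
              + φ (traj (Function.update u k w) N) θ) := by
        funext w
        rw [Finset.sum_eq_sum_Ico_succ_bot hjN, add_assoc]
      rw [heq]
      have houter : HasFDerivAt (fun x' => ℓ x' (u j) θ)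
          (fderiv ℝ (fun x' => ℓ x' (u j) θ) (x j)) (traj (Function.update u k (u k)) j) := by
        rw [hyuk j hjN.le]
        exact (hℓx (x j) (u j)).hasFDerivAt
      have h1 := houter.comp (u k) (hyder j hjN.le)
      have h2 := ih (j + 1) (by omega) (by omega)
      have hBj1 : B (j + 1) = (fderiv ℝ (fun x' => f x' (u j) θ) (x j)).comp (B j) := by
        rw [hBs, if_neg (by omega)]
      have hder : (innerSL ℝ (lam j)).comp (B j)
          = (fderiv ℝ (fun x' => ℓ x' (u j) θ) (x j)).comp (B j)
            + (innerSL ℝ (lam (j + 1))).comp (B (j + 1)) := by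
        apply ContinuousLinearMap.ext
        intro h
        simp only [ContinuousLinearMap.comp_apply, ContinuousLinearMap.add_apply, hBj1,
          innerSL_apply_apply]
        rw [hlam j hjN, inner_add_left, grad_inner_eq, ContinuousLinearMap.adjoint_inner_left]
      rw [hder]
      exact h1.add h2
  -- local minimality along the k-th control coordinate
  have hcont : ContinuousAt (fun w : E nu => Function.update u k w) (u k) := by
    apply Continuous.continuousAt
    apply continuous_pi
    intro i
    by_cases hik : i = k
    · subst hik
      simp only [Function.update_self]
      exact continuous_id
    · simp only [Function.update_of_ne hik]
      exact continuous_const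
  have hmin' : IsLocalMin ((fun v : ℕ → E nu =>
      (∑ i ∈ Finset.range N, ℓ (traj v i) (v i) θ) + φ (traj v N) θ)
        ∘ (fun w => Function.update u k w)) (u k) := by
    apply IsLocalMin.comp_continuous _ hcont
    show IsLocalMin _ (Function.update u k (u k))
    rw [hgb]
    exact hmin
  -- compute the derivative of the reduced cost
  have hfun : ∀ w : E nu,
      (∑ i ∈ Finset.range N, ℓ (traj (Function.update u k w) i) (Function.update u k w i) θ)
        + φ (traj (Function.update u k w) N) θ
      = (∑ i ∈ Finset.range k, ℓ (x i) (u i) θ)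
        + (ℓ (x k) w θ
          + ((∑ i ∈ Finset.Ico (k + 1) N, ℓ (traj (Function.update u k w) i) (u i) θ)
            + φ (traj (Function.update u k w) N) θ)) := by
    intro w
    rw [Finset.range_eq_Ico, ← Finset.sum_Ico_consecutive _ (Nat.zero_le k) hk.le,
      Finset.sum_eq_sum_Ico_succ_bot hk]
    have h1 : ∑ i ∈ Finset.Ico 0 k,
        ℓ (traj (Function.update u k w) i) (Function.update u k w i) θ
        = ∑ i ∈ Finset.range k, ℓ (x i) (u i) θ := by
      rw [← Finset.range_eq_Ico]
      apply Finset.sum_congr rfl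
      intro i hi
      have hik : i < k := Finset.mem_range.mp hi
      rw [hylow w i hik.le, Function.update_of_ne (Nat.ne_of_lt hik)]
    have h2 : ∑ i ∈ Finset.Ico (k + 1) N,
        ℓ (traj (Function.update u k w) i) (Function.update u k w i) θ
        = ∑ i ∈ Finset.Ico (k + 1) N, ℓ (traj (Function.update u k w) i) (u i) θ := by
      apply Finset.sum_congr rfl
      intro i hi
      have : k + 1 ≤ i := (Finset.mem_Ico.mp hi).1
      rw [Function.update_of_ne (by omega)]
    rw [h1, h2, hylow w k le_rfl, Function.update_self]
    ring
  have hL1 : HasFDerivAt (fun w : E nu => ℓ (x k) w θ)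
      (fderiv ℝ (fun u' => ℓ (x k) u' θ) (u k)) (u k) := (hℓu (x k) (u k)).hasFDerivAt
  have hG1 := hG (N - (k + 1)) (k + 1) (by omega) (by omega)
  have hgder : HasFDerivAt (fun w : E nu =>
      (∑ i ∈ Finset.range N, ℓ (traj (Function.update u k w) i) (Function.update u k w i) θ)
        + φ (traj (Function.update u k w) N) θ)
      (fderiv ℝ (fun u' => ℓ (x k) u' θ) (u k) + (innerSL ℝ (lam (k + 1))).comp (B (k + 1)))
      (u k) := by
    have heq := funext hfun
    rw [heq]
    exact (hL1.add hG1).const_add _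
  have h0 : fderiv ℝ (fun u' => ℓ (x k) u' θ) (u k)
      + (innerSL ℝ (lam (k + 1))).comp (B (k + 1)) = 0 :=
    hmin'.hasFDerivAt_eq_zero hgder
  have hBk1 : B (k + 1) = fderiv ℝ (fun u' => f (x k) u' θ) (u k) := by
    rw [hBs, if_pos rfl]
  set v : E nu := gradient (fun u' => ℓ (x k) u' θ) (u k)
    + ContinuousLinearMap.adjoint (fderiv ℝ (fun u' => f (x k) u' θ) (u k)) (lam (k + 1)) with hv
  have hvz : ∀ h : E nu, ⟪v, h⟫_ℝ = 0 := by
    intro h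
    have hh := ContinuousLinearMap.ext_iff.mp h0 h
    simp only [ContinuousLinearMap.add_apply, ContinuousLinearMap.comp_apply, hBk1,
      innerSL_apply_apply, ContinuousLinearMap.zero_apply] at hh
    rw [hv, inner_add_left, grad_inner_eq, ContinuousLinearMap.adjoint_inner_left]
    exact hh
  have : v = 0 := by
    have := hvz v
    rwa [inner_self_eq_zero] at this
  exact this.symm
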